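/- Let n, k ≥ 1. On ℂ[x_{j,c} : 1 ≤ j ≤ n, 1 ≤ c ≤ k], for a ∈ {1,…,2n} and c ∈ {1,…,k} let q̂_{a,c} be: multiplication by x_{a,c} if a ≤ n, and −i·∂/∂x_{a−n,c} if a > n. For X ∈ Mat_{2n}(ℂ) with XᵀJₙ + JₙX = 0, set π(X) = (i/2) Σ_{a,b=1}^{2n} (JₙX)_{b,a} Σ_{c=1}^k (q̂_{a,c} ∘ q̂_{b,c}). Then: (a) π(X)∘π(Y) − π(Y)∘π(X) = π(XY − YX) for all X, Y ∈ sp_n(ℂ); (b) for every g ∈ Mat_k(ℂ) with gᵀg = 1_k, letting ρ(g) be the ℂ-algebra endomorphism determined by x_{j,a} ↦ Σ_b x_{j,b} g_{b,a}, one has ρ(g) ∘ π(X) = π(X) ∘ ρ(g) for all X ∈ sp_n(ℂ). -/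
import Mathlib

open Matrix MvPolynomial

/-- The standard complex symplectic matrix `Jₙ = [[0, 1ₙ], [−1ₙ, 0]]`. -/
noncomputable def Jmat (n : ℕ) : Matrix (Fin n ⊕ Fin n) (Fin n ⊕ Fin n) ℂ :=
  Matrix.fromBlocks 0 1 (-1) 0

/-- The quantized coordinates `q̂_{a,c}` on `ℂ[x_{j,c}]`: multiplication by `x_{a,c}` for
`a ≤ n` (`Sum.inl`), and `−i ∂/∂x_{a−n,c}` for `a > n` (`Sum.inr`). -/
noncomputable def qop (n k : ℕ) :
    Fin n ⊕ Fin n → Fin k → Module.End ℂ (MvPolynomial (Fin n × Fin k) ℂ)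
  | Sum.inl a, c => LinearMap.mulLeft ℂ (MvPolynomial.X (a, c))
  | Sum.inr a, c => (-Complex.I) • (MvPolynomial.pderiv (a, c)).toLinearMap

/-- The quantized moment map representation
`π(X) = (i/2) Σ_{a,b} (Jₙ X)_{b,a} Σ_c q̂_{a,c} ∘ q̂_{b,c}`. -/
noncomputable def oscRep (n k : ℕ) (X : Matrix (Fin n ⊕ Fin n) (Fin n ⊕ Fin n) ℂ) :
    Module.End ℂ (MvPolynomial (Fin n × Fin k) ℂ) :=
  (Complex.I / 2) • ∑ a : Fin n ⊕ Fin n, ∑ b : Fin n ⊕ Fin n,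
    ((Jmat n * X) b a) • ∑ c : Fin k, qop n k a c * qop n k b c

/-- The right-translation operator `ρ(g) : f(x) ↦ f(xg)` determined by
`x_{j,a} ↦ Σ_b x_{j,b} g_{b,a}`. -/
noncomputable def rho (n k : ℕ) (g : Matrix (Fin k) (Fin k) ℂ) :
    MvPolynomial (Fin n × Fin k) ℂ →ₐ[ℂ] MvPolynomial (Fin n × Fin k) ℂ :=
  MvPolynomial.aeval fun p =>
    ∑ b : Fin k, MvPolynomial.X (p.1, b) * MvPolynomial.C (g b p.2)

/-! ### Auxiliary lemmas -/

section Aux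

set_option linter.unusedSectionVars false

lemma pderiv_pderiv_comm' {σ R : Type*} [CommRing R] [DecidableEq σ] (p q : σ)
    (f : MvPolynomial σ R) :
    MvPolynomial.pderiv p (MvPolynomial.pderiv q f)
      = MvPolynomial.pderiv q (MvPolynomial.pderiv p f) := by
  induction f using MvPolynomial.induction_on with
  | C a => simp
  | add f g hf hg => simp [hf, hg]
  | mul_X f s hf =>
    simp only [MvPolynomial.pderiv_mul, map_add, hf, MvPolynomial.pderiv_X, Pi.single_apply]
    split_ifs <;> simp <;> ring

variable {R : Type*} [Ring R] [Algebra ℂ R] {ι : Type*} [Fintype ι] [DecidableEq ι]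
variable {N : Type*} [AddCommMonoid N]

lemma comm4 (q1 q2 q3 q4 : R) (c13 c14 c23 c24 : ℂ)
    (h13 : q1*q3 - q3*q1 = c13 • 1) (h14 : q1*q4 - q4*q1 = c14 • 1)
    (h23 : q2*q3 - q3*q2 = c23 • 1) (h24 : q2*q4 - q4*q2 = c24 • 1) :
    q1*q2*(q3*q4) - q3*q4*(q1*q2)
      = c23 • (q1*q4) + c24 • (q1*q3) + c13 • (q4*q2) + c14 • (q3*q2) := by
  have e13 : q1*q3 = q3*q1 + c13 • 1 := by rw [← h13]; noncomm_ring
  have e14 : q1*q4 = q4*q1 + c14 • 1 := by rw [← h14]; noncomm_ring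
  have e23 : q2*q3 = q3*q2 + c23 • 1 := by rw [← h23]; noncomm_ring
  have e24 : q2*q4 = q4*q2 + c24 • 1 := by rw [← h24]; noncomm_ring
  have key : q1*q2*(q3*q4) = q3*q4*(q1*q2)
      + (c23 • (q1*q4) + c24 • (q1*q3) + c13 • (q4*q2) + c14 • (q3*q2)) := by
    calc q1*q2*(q3*q4) = q1*(q2*q3)*q4 := by noncomm_ring
    _ = q1*(q3*q2 + c23 • 1)*q4 := by rw [e23]
    _ = q1*q3*(q2*q4) + c23 • (q1*q4) := by
        simp only [mul_add, add_mul, mul_one, one_mul, smul_mul_assoc, mul_smul_comm]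
        noncomm_ring
    _ = q1*q3*(q4*q2 + c24 • 1) + c23 • (q1*q4) := by rw [e24]
    _ = (q1*q3)*(q4*q2) + c24 • (q1*q3) + c23 • (q1*q4) := by
        simp only [mul_add, mul_one, mul_smul_comm]
    _ = (q3*q1 + c13 • 1)*(q4*q2) + c24 • (q1*q3) + c23 • (q1*q4) := by rw [e13]
    _ = q3*(q1*q4)*q2 + c13 • (q4*q2) + c24 • (q1*q3) + c23 • (q1*q4) := by
        simp only [add_mul, smul_mul_assoc, one_mul]
        noncomm_ring
    _ = q3*(q4*q1 + c14 • 1)*q2 + c13 • (q4*q2) + c24 • (q1*q3) + c23 • (q1*q4) := by rw [e14]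
    _ = q3*q4*(q1*q2) + (c23 • (q1*q4) + c24 • (q1*q3) + c13 • (q4*q2) + c14 • (q3*q2)) := by
        simp only [mul_add, add_mul, mul_one, one_mul, smul_mul_assoc, mul_smul_comm]
        noncomm_ring
  rw [key]; abel

lemma comm_T {κ : Type*} [Fintype κ] [DecidableEq κ] (J : Matrix ι ι ℂ) (q : ι → κ → R)
    (ccr : ∀ a b c d, q a c * q b d - q b d * q a c = (if c = d then Complex.I * J a b else 0) • 1)
    (a b a' b' : ι) :
    (∑ c, q a c * q b c) * (∑ c, q a' c * q b' c)
        - (∑ c, q a' c * q b' c) * (∑ c, q a c * q b c)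
      = Complex.I • (J b a' • ∑ c, q a c * q b' c) + Complex.I • (J b b' • ∑ c, q a c * q a' c)
        + Complex.I • (J a a' • ∑ c, q b' c * q b c)
        + Complex.I • (J a b' • ∑ c, q a' c * q b c) := by
  have key : ∀ c d : κ,
      (q a c * q b c) * (q a' d * q b' d) - (q a' d * q b' d) * (q a c * q b c)
      = (if c = d then Complex.I * J b a' else 0) • (q a c * q b' d)
      + (if c = d then Complex.I * J b b' else 0) • (q a c * q a' d)
      + (if c = d then Complex.I * J a a' else 0) • (q b' d * q b c)
      + (if c = d then Complex.I * J a b' else 0) • (q a' d * q b c) := by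
    intro c d
    exact comm4 _ _ _ _ _ _ _ _ (ccr a a' c d) (ccr a b' c d) (ccr b a' c d) (ccr b b' c d)
  rw [Finset.sum_mul_sum, Finset.sum_mul_sum]
  rw [Finset.sum_comm (f := fun d c => (q a' d * q b' d) * (q a c * q b c))]
  rw [← Finset.sum_sub_distrib]
  simp only [← Finset.sum_sub_distrib, key, Finset.sum_add_distrib, ite_smul, zero_smul,
    Finset.sum_ite_eq, Finset.mem_univ, if_true, ← Finset.smul_sum, mul_smul]

lemma swap12 (f : ι → ι → ι → ι → N) :
    ∑ a, ∑ b, ∑ c, ∑ d, f a b c d = ∑ b, ∑ a, ∑ c, ∑ d, f a b c d := Finset.sum_comm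
lemma swap23 (f : ι → ι → ι → ι → N) :
    ∑ a, ∑ b, ∑ c, ∑ d, f a b c d = ∑ a, ∑ c, ∑ b, ∑ d, f a b c d :=
  Finset.sum_congr rfl fun _ _ => Finset.sum_comm
lemma swap34 (f : ι → ι → ι → ι → N) :
    ∑ a, ∑ b, ∑ c, ∑ d, f a b c d = ∑ a, ∑ b, ∑ d, ∑ c, f a b c d :=
  Finset.sum_congr rfl fun _ _ => Finset.sum_congr rfl fun _ _ => Finset.sum_comm

lemma collapse1 (A B J : Matrix ι ι ℂ) (T : ι → ι → R) :
    (∑ a, ∑ b, ∑ a', ∑ b', (A b a * B b' a' * (Complex.I * J b a')) • T a b')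
      = Complex.I • ∑ α, ∑ β, (B * Jᵀ * A) β α • T α β := by
  rw [swap34 (f := fun a b a' b' => (A b a * B b' a' * (Complex.I * J b a')) • T a b'),
    swap23 (f := fun a b b' a' => (A b a * B b' a' * (Complex.I * J b a')) • T a b')]
  simp only [← Finset.sum_smul, Finset.smul_sum, smul_smul]
  refine Finset.sum_congr rfl fun α _ => Finset.sum_congr rfl fun β _ => ?_
  congr 1
  simp only [Matrix.mul_apply, Matrix.transpose_apply, Finset.sum_mul, Finset.mul_sum]
  exact Finset.sum_congr rfl fun y _ => Finset.sum_congr rfl fun x _ => by ring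

lemma collapse2 (A B J : Matrix ι ι ℂ) (T : ι → ι → R) :
    (∑ a, ∑ b, ∑ a', ∑ b', (A b a * B b' a' * (Complex.I * J b b')) • T a a')
      = Complex.I • ∑ α, ∑ β, (Bᵀ * Jᵀ * A) β α • T α β := by
  rw [swap23 (f := fun a b a' b' => (A b a * B b' a' * (Complex.I * J b b')) • T a a')]
  simp only [← Finset.sum_smul, Finset.smul_sum, smul_smul]
  refine Finset.sum_congr rfl fun α _ => Finset.sum_congr rfl fun β _ => ?_
  congr 1
  simp only [Matrix.mul_apply, Matrix.transpose_apply, Finset.sum_mul, Finset.mul_sum]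
  exact Finset.sum_congr rfl fun y _ => Finset.sum_congr rfl fun x _ => by ring

lemma collapse3 (A B J : Matrix ι ι ℂ) (T : ι → ι → R) :
    (∑ a, ∑ b, ∑ a', ∑ b', (A b a * B b' a' * (Complex.I * J a a')) • T b' b)
      = Complex.I • ∑ α, ∑ β, (A * J * Bᵀ) β α • T α β := by
  rw [swap34 (f := fun a b a' b' => (A b a * B b' a' * (Complex.I * J a a')) • T b' b),
    swap23 (f := fun a b b' a' => (A b a * B b' a' * (Complex.I * J a a')) • T b' b),
    swap12 (f := fun a b' b a' => (A b a * B b' a' * (Complex.I * J a a')) • T b' b),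
    swap23 (f := fun b' a b a' => (A b a * B b' a' * (Complex.I * J a a')) • T b' b)]
  simp only [← Finset.sum_smul, Finset.smul_sum, smul_smul]
  refine Finset.sum_congr rfl fun α _ => Finset.sum_congr rfl fun β _ => ?_
  congr 1
  simp only [Matrix.mul_apply, Matrix.transpose_apply, Finset.sum_mul, Finset.mul_sum]
  rw [Finset.sum_comm]
  exact Finset.sum_congr rfl fun y _ => Finset.sum_congr rfl fun x _ => by ring

lemma collapse4 (A B J : Matrix ι ι ℂ) (T : ι → ι → R) :
    (∑ a, ∑ b, ∑ a', ∑ b', (A b a * B b' a' * (Complex.I * J a b')) • T a' b)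
      = Complex.I • ∑ α, ∑ β, (A * J * B) β α • T α β := by
  rw [swap23 (f := fun a b a' b' => (A b a * B b' a' * (Complex.I * J a b')) • T a' b),
    swap12 (f := fun a a' b b' => (A b a * B b' a' * (Complex.I * J a b')) • T a' b),
    swap23 (f := fun a' a b b' => (A b a * B b' a' * (Complex.I * J a b')) • T a' b)]
  simp only [← Finset.sum_smul, Finset.smul_sum, smul_smul]
  refine Finset.sum_congr rfl fun α _ => Finset.sum_congr rfl fun β _ => ?_
  congr 1
  simp only [Matrix.mul_apply, Matrix.transpose_apply, Finset.sum_mul, Finset.mul_sum]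
  rw [Finset.sum_comm]
  exact Finset.sum_congr rfl fun y _ => Finset.sum_congr rfl fun x _ => by ring

lemma comm_S {κ : Type*} [Fintype κ] [DecidableEq κ] (J : Matrix ι ι ℂ) (q : ι → κ → R)
    (ccr : ∀ a b c d, q a c * q b d - q b d * q a c = (if c = d then Complex.I * J a b else 0) • 1)
    (A B : Matrix ι ι ℂ) (T : ι → ι → R) (hT : ∀ a b, T a b = ∑ c, q a c * q b c)
    (S : Matrix ι ι ℂ → R) (hS : ∀ M, S M = ∑ a, ∑ b, M b a • T a b) :
    S A * S B - S B * S A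
      = Complex.I • S (B * Jᵀ * A) + Complex.I • S (Bᵀ * Jᵀ * A)
        + Complex.I • S (A * J * Bᵀ) + Complex.I • S (A * J * B) := by
  simp only [hS]
  have step1 : (∑ a, ∑ b, A b a • T a b) * (∑ a, ∑ b, B b a • T a b)
      = ∑ a, ∑ b, ∑ a', ∑ b', (A b a * B b' a') • (T a b * T a' b') := by
    simp only [Finset.sum_mul, Finset.mul_sum, Finset.smul_sum, smul_mul_assoc, mul_smul_comm,
      smul_smul]
    rw [swap23 (f := fun w x y z => (B x w * A z y) • (T y z * T w x)),
      swap12 (f := fun w y x z => (B x w * A z y) • (T y z * T w x)),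
      swap34 (f := fun y w x z => (B x w * A z y) • (T y z * T w x)),
      swap23 (f := fun y w z x => (B x w * A z y) • (T y z * T w x))]
    refine Finset.sum_congr rfl fun a _ => Finset.sum_congr rfl fun b _ =>
      Finset.sum_congr rfl fun a' _ => Finset.sum_congr rfl fun b' _ => ?_
    congr 1
    ring
  have step2 : (∑ a, ∑ b, B b a • T a b) * (∑ a, ∑ b, A b a • T a b)
      = ∑ a, ∑ b, ∑ a', ∑ b', (A b a * B b' a') • (T a' b' * T a b) := by
    simp only [Finset.sum_mul, Finset.mul_sum, Finset.smul_sum, smul_mul_assoc, mul_smul_comm,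
      smul_smul]
  rw [step1, step2, ← Finset.sum_sub_distrib]
  simp only [← Finset.sum_sub_distrib, ← smul_sub]
  have key : ∀ a b a' b' : ι, (A b a * B b' a') • (T a b * T a' b' - T a' b' * T a b)
      = (A b a * B b' a' * (Complex.I * J b a')) • T a b'
        + (A b a * B b' a' * (Complex.I * J b b')) • T a a'
        + (A b a * B b' a' * (Complex.I * J a a')) • T b' b
        + (A b a * B b' a' * (Complex.I * J a b')) • T a' b := by
    intro a b a' b'
    simp only [hT]
    rw [comm_T J q ccr a b a' b']
    simp only [smul_add, smul_smul]
  simp only [key, Finset.sum_add_distrib]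
  rw [collapse1 A B J T, collapse2 A B J T, collapse3 A B J T, collapse4 A B J T]


lemma swap12₃ (f : ι → ι → ι → N) :
    ∑ a, ∑ b, ∑ c, f a b c = ∑ b, ∑ a, ∑ c, f a b c := Finset.sum_comm
lemma swap23₃ (f : ι → ι → ι → N) :
    ∑ a, ∑ b, ∑ c, f a b c = ∑ a, ∑ c, ∑ b, f a b c :=
  Finset.sum_congr rfl fun _ _ => Finset.sum_comm

end Aux

section Main

variable (n k : ℕ)

lemma qop_comm (a b : Fin n ⊕ Fin n) (c d : Fin k) :
    qop n k a c * qop n k b d - qop n k b d * qop n k a c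
      = (if c = d then Complex.I * Jmat n a b else 0) • 1 := by
  cases a with
  | inl a =>
    cases b with
    | inl b =>
      ext f
      simp [qop, Jmat, Module.End.mul_apply, LinearMap.mulLeft_apply]
      ring
    | inr b =>
      ext f
      simp [qop, Jmat, Module.End.mul_apply, LinearMap.mulLeft_apply, pderiv_mul,
        Pi.single_apply, Prod.mk.injEq, Matrix.one_apply]
      split_ifs <;> simp_all <;> ring
  | inr a =>
    cases b with
    | inl b =>
      ext f
      simp [qop, Jmat, Module.End.mul_apply, LinearMap.mulLeft_apply, pderiv_mul,
        Pi.single_apply, Prod.mk.injEq, Matrix.one_apply]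
      split_ifs <;> simp_all <;> ring
    | inr b =>
      apply LinearMap.ext; intro f
      simp only [qop, Jmat, LinearMap.sub_apply, Module.End.mul_apply, LinearMap.smul_apply,
        Matrix.fromBlocks_apply₂₂, Matrix.zero_apply, mul_zero, ite_self, zero_smul]
      rw [_root_.map_smul, _root_.map_smul, Derivation.coeFn_coe, Derivation.coeFn_coe,
        show (pderiv ((a : Fin n),c)) ((pderiv ((b : Fin n),d)) f)
            = (pderiv (b,d)) ((pderiv (a,c)) f) from pderiv_pderiv_comm' _ _ f]
      simp

/-- `T_{ab} = Σ_c q̂_{a,c} q̂_{b,c}`. -/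
noncomputable def Tq (a b : Fin n ⊕ Fin n) : Module.End ℂ (MvPolynomial (Fin n × Fin k) ℂ) :=
  ∑ c, qop n k a c * qop n k b c

/-- `S(M) = Σ_{a,b} M_{ba} T_{ab}`. -/
noncomputable def Sq (M : Matrix (Fin n ⊕ Fin n) (Fin n ⊕ Fin n) ℂ) :
    Module.End ℂ (MvPolynomial (Fin n × Fin k) ℂ) :=
  ∑ a, ∑ b, M b a • Tq n k a b

lemma oscRep_eq (X : Matrix (Fin n ⊕ Fin n) (Fin n ⊕ Fin n) ℂ) :
    oscRep n k X = (Complex.I / 2) • Sq n k (Jmat n * X) := rfl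

lemma Sop_neg (M : Matrix (Fin n ⊕ Fin n) (Fin n ⊕ Fin n) ℂ) :
    Sq n k (-M) = -Sq n k M := by
  rw [Sq, Sq, ← Finset.sum_neg_distrib]
  refine Finset.sum_congr rfl fun a _ => ?_
  rw [← Finset.sum_neg_distrib]
  refine Finset.sum_congr rfl fun b _ => ?_
  exact (Matrix.neg_apply M b a) ▸ neg_smul (M b a) (Tq n k a b)

lemma Sop_sub (M N : Matrix (Fin n ⊕ Fin n) (Fin n ⊕ Fin n) ℂ) :
    Sq n k (M - N) = Sq n k M - Sq n k N := by
  rw [Sq, Sq, Sq, ← Finset.sum_sub_distrib]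
  refine Finset.sum_congr rfl fun a _ => ?_
  rw [← Finset.sum_sub_distrib]
  refine Finset.sum_congr rfl fun b _ => ?_
  exact (Matrix.sub_apply M N b a) ▸ sub_smul (M b a) (N b a) (Tq n k a b)

lemma Jmat_transpose : (Jmat n)ᵀ = -(Jmat n) := by
  simp [Jmat, Matrix.fromBlocks_transpose, Matrix.fromBlocks_neg]

lemma Jmat_mul_Jmat : Jmat n * Jmat n = -1 := by
  simp [Jmat, Matrix.fromBlocks_multiply, ← Matrix.fromBlocks_one, Matrix.fromBlocks_neg]

lemma rho_X_apply (g : Matrix (Fin k) (Fin k) ℂ) (p : Fin n × Fin k) :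
    rho n k g (MvPolynomial.X p)
      = ∑ b, MvPolynomial.X (p.1, b) * MvPolynomial.C (g b p.2) := by
  simp [rho]

lemma pderiv_rho (g : Matrix (Fin k) (Fin k) ℂ) (j : Fin n) (c : Fin k)
    (f : MvPolynomial (Fin n × Fin k) ℂ) :
    pderiv (j, c) (rho n k g f) = ∑ d, g c d • rho n k g (pderiv (j, d) f) := by
  induction f using MvPolynomial.induction_on with
  | C a => simp [rho]
  | add f h hf hh => simp [map_add, hf, hh, Finset.sum_add_distrib, smul_add]
  | mul_X f s hf =>
    have hgen : pderiv (j, c) (rho n k g (MvPolynomial.X s))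
        = ∑ d, g c d • rho n k g (pderiv (j, d) (MvPolynomial.X s)) := by
      obtain ⟨s1, s2⟩ := s
      simp only [rho_X_apply, map_sum, pderiv_mul, pderiv_C, mul_zero, add_zero, pderiv_X,
        Pi.single_apply, Prod.mk.injEq]
      by_cases hj : s1 = j
      · subst hj
        simp [Finset.sum_ite_eq, apply_ite (rho n k g), MvPolynomial.smul_eq_C_mul,
          Finset.sum_ite_eq', eq_comm]
      · simp [hj, Ne.symm hj]
    simp only [_root_.map_mul, map_add, pderiv_mul, hf, hgen, Finset.sum_mul, Finset.mul_sum,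
      smul_mul_assoc, mul_smul_comm, smul_add, Finset.sum_add_distrib]

lemma rho_qop (g : Matrix (Fin k) (Fin k) ℂ) (hg : gᵀ * g = 1) (a : Fin n ⊕ Fin n)
    (d : Fin k) :
    (rho n k g).toLinearMap * qop n k a d
      = ∑ c, g c d • (qop n k a c * (rho n k g).toLinearMap) := by
  cases a with
  | inl a =>
    apply LinearMap.ext; intro f
    simp only [Module.End.mul_apply, qop, LinearMap.mulLeft_apply, AlgHom.toLinearMap_apply,
      _root_.map_mul, rho_X_apply, LinearMap.sum_apply, LinearMap.smul_apply, Finset.sum_mul]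
    refine Finset.sum_congr rfl fun c _ => ?_
    rw [MvPolynomial.smul_eq_C_mul]
    ring
  | inr a =>
    apply LinearMap.ext; intro f
    simp only [Module.End.mul_apply, qop, LinearMap.smul_apply, AlgHom.toLinearMap_apply,
      LinearMap.sum_apply, Derivation.coeFn_coe, _root_.map_smul, pderiv_rho]
    set w : Fin k → MvPolynomial (Fin n × Fin k) ℂ :=
      fun d' => rho n k g (pderiv (a, d') f) with hw
    have hone : ∀ d', (∑ c, g c d * g c d') = (1 : Matrix (Fin k) (Fin k) ℂ) d d' := by
      intro d'
      rw [← hg]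
      simp [Matrix.mul_apply, Matrix.transpose_apply]
    have key : ∑ c, g c d • (-Complex.I • ∑ d', g c d' • w d') = -Complex.I • w d := by
      calc ∑ c, g c d • (-Complex.I • ∑ d', g c d' • w d')
          = ∑ x, -Complex.I • ((∑ c, g c d * g c x) • w x) := by
            simp only [Finset.smul_sum, Finset.sum_smul, smul_smul]
            rw [Finset.sum_comm]
            refine Finset.sum_congr rfl fun x _ => Finset.sum_congr rfl fun c _ => ?_
            congr 1
            ring
        _ = -Complex.I • w d := by
            simp only [hone, Matrix.one_apply, ite_smul, one_smul, zero_smul, smul_ite,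
              smul_zero, Finset.sum_ite_eq, Finset.mem_univ, if_true]
    exact key.symm

lemma rho_Tq (g : Matrix (Fin k) (Fin k) ℂ) (hg : gᵀ * g = 1) (a b : Fin n ⊕ Fin n) :
    (rho n k g).toLinearMap * Tq n k a b = Tq n k a b * (rho n k g).toLinearMap := by
  have hggT : g * gᵀ = 1 := mul_eq_one_comm.mp hg
  rw [Tq, Finset.mul_sum, Finset.sum_mul]
  have h1 : ∀ d, (rho n k g).toLinearMap * (qop n k a d * qop n k b d)
      = ∑ c, ∑ c', (g c d * g c' d) • (qop n k a c * (qop n k b c'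
          * (rho n k g).toLinearMap)) := by
    intro d
    rw [← mul_assoc, rho_qop n k g hg a d, Finset.sum_mul]
    refine Finset.sum_congr rfl fun c _ => ?_
    rw [smul_mul_assoc, mul_assoc, rho_qop n k g hg b d, Finset.mul_sum, Finset.smul_sum]
    refine Finset.sum_congr rfl fun c' _ => ?_
    rw [mul_smul_comm, smul_smul]
  simp only [h1]
  rw [swap12₃ (f := fun d c c' => (g c d * g c' d) • (qop n k a c * (qop n k b c'
      * (rho n k g).toLinearMap)))]
  rw [swap23₃ (f := fun c d c' => (g c d * g c' d) • (qop n k a c * (qop n k b c'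
      * (rho n k g).toLinearMap)))]
  refine Finset.sum_congr rfl fun c _ => ?_
  have h2 : ∀ c', (∑ d, g c d * g c' d) = (1 : Matrix (Fin k) (Fin k) ℂ) c c' := by
    intro c'
    rw [← hggT]
    simp [Matrix.mul_apply, Matrix.transpose_apply]
  calc ∑ c', ∑ d, (g c d * g c' d) • (qop n k a c * (qop n k b c'
        * (rho n k g).toLinearMap))
      = ∑ c', (∑ d, g c d * g c' d) • (qop n k a c * (qop n k b c'
        * (rho n k g).toLinearMap)) := by
        refine Finset.sum_congr rfl fun c' _ => ?_
        exact (Finset.sum_smul).symm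
    _ = qop n k a c * qop n k b c * (rho n k g).toLinearMap := by
        simp only [h2, Matrix.one_apply, ite_smul, one_smul, zero_smul,
          Finset.sum_ite_eq, Finset.mem_univ, if_true, mul_assoc]

lemma rho_Sq (g : Matrix (Fin k) (Fin k) ℂ) (hg : gᵀ * g = 1)
    (M : Matrix (Fin n ⊕ Fin n) (Fin n ⊕ Fin n) ℂ) :
    (rho n k g).toLinearMap * Sq n k M = Sq n k M * (rho n k g).toLinearMap := by
  rw [Sq, Finset.mul_sum, Finset.sum_mul]
  refine Finset.sum_congr rfl fun a _ => ?_
  rw [Finset.mul_sum, Finset.sum_mul]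
  refine Finset.sum_congr rfl fun b _ => ?_
  rw [mul_smul_comm, smul_mul_assoc, rho_Tq n k g hg]

end Main

theorem oscRep_k_lie_hom_and_Ok_invariant (n k : ℕ) (hn : 1 ≤ n) (hk : 1 ≤ k) :
    -- (a) `π` is a Lie algebra homomorphism on `sp_n(ℂ)`
    (∀ X Y : Matrix (Fin n ⊕ Fin n) (Fin n ⊕ Fin n) ℂ,
      Xᵀ * Jmat n + Jmat n * X = 0 → Yᵀ * Jmat n + Jmat n * Y = 0 →
      oscRep n k X * oscRep n k Y - oscRep n k Y * oscRep n k X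
        = oscRep n k (X * Y - Y * X)) ∧
    -- (b) `π(X)` commutes with the action of the complex orthogonal group `O_k(ℂ)`
    (∀ g : Matrix (Fin k) (Fin k) ℂ, gᵀ * g = 1 →
      ∀ X : Matrix (Fin n ⊕ Fin n) (Fin n ⊕ Fin n) ℂ,
        Xᵀ * Jmat n + Jmat n * X = 0 →
        (rho n k g).toLinearMap ∘ₗ oscRep n k X
          = oscRep n k X ∘ₗ (rho n k g).toLinearMap) := by
  constructor
  · intro X Y hX hY
    have hJT := Jmat_transpose n
    have hJJ := Jmat_mul_Jmat n
    have hXJ : Xᵀ * Jmat n = -(Jmat n * X) := eq_neg_of_add_eq_zero_left hX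
    have hYJ : Yᵀ * Jmat n = -(Jmat n * Y) := eq_neg_of_add_eq_zero_left hY
    have hA : (Jmat n * X)ᵀ = Jmat n * X := by
      rw [Matrix.transpose_mul, hJT, Matrix.mul_neg, hXJ, neg_neg]
    have hB : (Jmat n * Y)ᵀ = Jmat n * Y := by
      rw [Matrix.transpose_mul, hJT, Matrix.mul_neg, hYJ, neg_neg]
    have hc := comm_S (Jmat n) (qop n k) (qop_comm n k) (Jmat n * X) (Jmat n * Y)
      (Tq n k) (fun _ _ => rfl) (Sq n k) (fun _ => rfl)
    have m1 : (Jmat n * Y) * (Jmat n)ᵀ * (Jmat n * X) = Jmat n * (Y * X) := by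
      rw [hJT]
      calc (Jmat n * Y) * -(Jmat n) * (Jmat n * X)
          = (Jmat n * Y) * -(Jmat n * Jmat n * X) := by noncomm_ring
        _ = (Jmat n * Y) * -(-1 * X) := by rw [hJJ]
        _ = Jmat n * (Y * X) := by noncomm_ring
    have m2 : (Jmat n * Y)ᵀ * (Jmat n)ᵀ * (Jmat n * X) = Jmat n * (Y * X) := by
      rw [hB, m1]
    have m4 : (Jmat n * X) * Jmat n * (Jmat n * Y) = -(Jmat n * (X * Y)) := by
      calc (Jmat n * X) * Jmat n * (Jmat n * Y)
          = (Jmat n * X) * (Jmat n * Jmat n * Y) := by noncomm_ring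
        _ = (Jmat n * X) * (-1 * Y) := by rw [hJJ]
        _ = -(Jmat n * (X * Y)) := by noncomm_ring
    have m3 : (Jmat n * X) * Jmat n * (Jmat n * Y)ᵀ = -(Jmat n * (X * Y)) := by
      rw [hB, m4]
    rw [m1, m2, m3, m4] at hc
    rw [oscRep_eq, oscRep_eq, oscRep_eq, Matrix.mul_sub, Sop_sub]
    rw [smul_mul_smul_comm, smul_mul_smul_comm,
      show (Complex.I/2 * (Complex.I/2)) • (Sq n k (Jmat n * X) * Sq n k (Jmat n * Y))
          - (Complex.I/2 * (Complex.I/2)) • (Sq n k (Jmat n * Y) * Sq n k (Jmat n * X))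
        = (Complex.I/2 * (Complex.I/2)) • (Sq n k (Jmat n * X) * Sq n k (Jmat n * Y)
            - Sq n k (Jmat n * Y) * Sq n k (Jmat n * X)) from (smul_sub _ _ _).symm,
      hc, Sop_neg]
    generalize Sq n k (Jmat n * (Y * X)) = u
    generalize Sq n k (Jmat n * (X * Y)) = v
    match_scalars
    · ring_nf
      linear_combination (Complex.I/2) * Complex.I_sq
    · ring_nf
      linear_combination (-Complex.I/2) * Complex.I_sq
  · intro g hg X hX
    rw [← Module.End.mul_eq_comp, ← Module.End.mul_eq_comp, oscRep_eq, mul_smul_comm,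
      smul_mul_assoc, rho_Sq n k g hg]
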